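/- For the positive definite n×n matrix G_n(a) = (a/n)E_n + v F_n (with F_n = ∇_n∇_nᵀ, a > 0, v ≥ 0) and R_n the matrix with 1 in the (1,1) entry and 0 elsewhere, the spectral norm satisfies ‖G_n(a)^{−1/2} R_n G_n(b)^{−1/2}‖_sp ≤ (4/(2n+1))·Σ_{k=1}^n (1/f_a(2ξ_k) + 1/f_b(2ξ_k)), where f_c(x) = c/n + 2v(1−cos x) and ξ_k = (π/(2n+1))(k−1/2), for any a, b > 0. -/

import Mathlib

open Real Matrix


lemma tele (θ : ℝ) (n : ℕ) :
    2 * Real.sin θ * ∑ j ∈ Finset.range n, Real.cos ((2*j+1)*θ) = Real.sin (2*n*θ) := by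
  have h : ∀ j : ℕ, Real.sin (2*(j+1:ℕ)*θ) - Real.sin (2*j*θ)
      = 2 * Real.sin θ * Real.cos ((2*j+1)*θ) := by
    intro j
    have hx : ((2*((j:ℝ)+1)*θ) - 2*j*θ)/2 = θ := by ring
    have hy : ((2*((j:ℝ)+1)*θ) + 2*j*θ)/2 = (2*j+1)*θ := by ring
    push_cast
    rw [Real.sin_sub_sin, hx, hy]
  have hsum := Finset.sum_range_sub (f := fun j : ℕ => Real.sin (2*j*θ)) n
  calc 2 * Real.sin θ * ∑ j ∈ Finset.range n, Real.cos ((2*j+1)*θ)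
      = ∑ j ∈ Finset.range n, (Real.sin (2*(j+1:ℕ)*θ) - Real.sin (2*j*θ)) := by
        rw [Finset.mul_sum]; exact Finset.sum_congr rfl fun j _ => (h j).symm
    _ = Real.sin (2*n*θ) - Real.sin (2*(0:ℕ)*θ) := hsum
    _ = Real.sin (2*n*θ) := by norm_num

lemma sum_cos (n m : ℕ) (hm0 : 0 < m) (hm : m < 2*n+1) :
    ∑ j ∈ Finset.range n, Real.cos ((2*j+1) * (m * π / (2*n+1))) = -(-1:ℝ)^m / 2 := by
  set θ : ℝ := m * π / (2*n+1) with hθ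
  have hN : (0:ℝ) < 2*n+1 := by positivity
  have hm0' : (0:ℝ) < m := by exact_mod_cast hm0
  have hθpos : 0 < θ := div_pos (mul_pos hm0' Real.pi_pos) hN
  have hθlt : θ < π := by
    rw [hθ, div_lt_iff₀ hN]
    have : (m:ℝ) < 2*n+1 := by exact_mod_cast hm
    nlinarith [Real.pi_pos]
  have hs : 0 < Real.sin θ := Real.sin_pos_of_pos_of_lt_pi hθpos hθlt
  have h2 : 2*(n:ℝ)*θ = m*π - θ := by
    rw [hθ]; field_simp; ring
  have ht := tele θ n
  rw [h2, Real.sin_nat_mul_pi_sub] at ht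
  refine mul_left_cancel₀ (mul_ne_zero two_ne_zero (ne_of_gt hs)) ?_
  rw [ht]; ring

noncomputable def xi (n : ℕ) (k : Fin n) : ℝ := (2*(k:ℕ)+1) * π / (2*(2*n+1))

lemma orth' (n : ℕ) (k l : Fin n) (h : (l:ℕ) < (k:ℕ)) :
    ∑ j : Fin n, Real.cos ((2*(j:ℕ)+1) * xi n k) * Real.cos ((2*(j:ℕ)+1) * xi n l) = 0 := by
  have hN : (2*(n:ℝ)+1) ≠ 0 := by positivity
  have step : ∀ j : ℕ, Real.cos ((2*j+1) * xi n k) * Real.cos ((2*j+1) * xi n l)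
      = (Real.cos ((2*j+1) * ((((k:ℕ)+(l:ℕ)+1:ℕ):ℝ) * π / (2*n+1)))
        + Real.cos ((2*j+1) * (((((k:ℕ)-(l:ℕ):ℕ)):ℝ) * π / (2*n+1)))) / 2 := by
    intro j
    have e1 : (2*(j:ℝ)+1) * ((((k:ℕ)+(l:ℕ)+1:ℕ):ℝ) * π / (2*n+1))
        = (2*j+1) * xi n k + (2*j+1) * xi n l := by
      unfold xi; push_cast; field_simp; ring
    have e2 : (2*(j:ℝ)+1) * (((((k:ℕ)-(l:ℕ):ℕ)):ℝ) * π / (2*n+1))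
        = (2*j+1) * xi n k - (2*j+1) * xi n l := by
      unfold xi; rw [Nat.cast_sub h.le]; push_cast; field_simp; ring
    rw [e1, e2, Real.cos_add, Real.cos_sub]; ring
  rw [Fin.sum_univ_eq_sum_range (fun j => Real.cos ((2*j+1) * xi n k) * Real.cos ((2*j+1) * xi n l))]
  rw [Finset.sum_congr rfl fun j _ => step j]
  rw [← Finset.sum_div, Finset.sum_add_distrib]
  rw [sum_cos n ((k:ℕ)+(l:ℕ)+1) (by omega) (by have := k.isLt; have := l.isLt; omega)]
  rw [sum_cos n ((k:ℕ)-(l:ℕ)) (by omega) (by have := k.isLt; omega)]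
  have hpar : (-1:ℝ)^((k:ℕ)+(l:ℕ)) = (-1:ℝ)^((k:ℕ)-(l:ℕ)) := by
    rw [show (k:ℕ)+(l:ℕ) = (k:ℕ)-(l:ℕ) + 2*(l:ℕ) by omega, pow_add, pow_mul]
    norm_num
  rw [pow_succ, ← hpar]
  ring

lemma orth (n : ℕ) (k l : Fin n) :
    ∑ j : Fin n, Real.cos ((2*(j:ℕ)+1) * xi n k) * Real.cos ((2*(j:ℕ)+1) * xi n l)
      = if k = l then (2*(n:ℝ)+1)/4 else 0 := by
  have hN : (2*(n:ℝ)+1) ≠ 0 := by positivity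
  rcases lt_trichotomy (l:ℕ) (k:ℕ) with hlt | heq | hgt
  · rw [if_neg (by intro hh; subst hh; omega)]
    exact orth' n k l hlt
  · have hkl : k = l := Fin.ext heq.symm
    subst hkl
    rw [if_pos rfl]
    have step : ∀ j : ℕ, Real.cos ((2*j+1) * xi n k) * Real.cos ((2*j+1) * xi n k)
        = 1/2 + Real.cos ((2*j+1) * ((((2*(k:ℕ)+1:ℕ)):ℝ) * π / (2*n+1)))/2 := by
      intro j
      have e : (2*(j:ℝ)+1) * ((((2*(k:ℕ)+1:ℕ)):ℝ) * π / (2*n+1)) = 2 * ((2*j+1) * xi n k) := by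
        unfold xi; push_cast; field_simp
      rw [e, ← Real.cos_sq ((2*j+1) * xi n k)]
      ring
    rw [Fin.sum_univ_eq_sum_range (fun j => Real.cos ((2*j+1) * xi n k) * Real.cos ((2*j+1) * xi n k))]
    rw [Finset.sum_congr rfl fun j _ => step j]
    rw [Finset.sum_add_distrib]
    simp only [← Finset.sum_div]
    rw [sum_cos n (2*(k:ℕ)+1) (by omega) (by have := k.isLt; omega)]
    rw [pow_succ, pow_mul]
    simp [Finset.sum_const]
    ring
  · rw [if_neg (by intro hh; subst hh; omega)]
    rw [Finset.sum_congr rfl fun j _ => mul_comm _ _]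
    exact orth' n l k hgt


noncomputable def Wf (n : ℕ) (k : Fin n) (t : ℕ) : ℝ := Real.cos ((2*(t:ℝ)+1) * xi n k)

noncomputable def Qm (n : ℕ) : Matrix (Fin n) (Fin n) ℝ :=
  Matrix.of fun k j => Real.cos ((2*(j:ℕ)+1) * xi n k)

lemma Wzero (n : ℕ) (k : Fin n) : Wf n k n = 0 := by
  have hN : (2*(n:ℝ)+1) ≠ 0 := by positivity
  unfold Wf xi
  rw [Real.cos_eq_zero_iff]
  refine ⟨(k:ℕ), ?_⟩
  push_cast
  field_simp

lemma trig_gen (x d : ℝ) : Real.cos (x - d) + Real.cos (x + d) = 2 * Real.cos d * Real.cos x := by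
  rw [Real.cos_sub, Real.cos_add]; ring

lemma Qnabla (n : ℕ)
    (nabla : Matrix (Fin n) (Fin n) ℝ)
    (hnabla : nabla = Matrix.of fun i j : Fin n =>
      if i = j then 1 else if (j : ℕ) + 1 = (i : ℕ) then -1 else 0)
    (k m : Fin n) :
    (Qm n * nabla) k m = Wf n k m - Wf n k ((m:ℕ)+1) := by
  rw [Matrix.mul_apply]
  have decomp : ∀ j : Fin n, Qm n k j * nabla j m
      = (if j = m then Qm n k j else 0) + (if (m:ℕ)+1 = (j:ℕ) then -Qm n k j else 0) := by
    intro j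
    rw [hnabla]
    simp only [Matrix.of_apply]
    split_ifs with h1 h2
    · exact absurd h2 (by subst h1; omega)
    · ring
    · ring
    · ring
  rw [Finset.sum_congr rfl fun j _ => decomp j, Finset.sum_add_distrib]
  rw [Finset.sum_ite_eq' Finset.univ m (fun j => Qm n k j)]
  simp only [Finset.mem_univ, if_pos]
  by_cases hlt : (m:ℕ)+1 < n
  · have : ∀ j : Fin n, (if (m:ℕ)+1 = (j:ℕ) then -Qm n k j else 0)
        = (if j = (⟨(m:ℕ)+1, hlt⟩ : Fin n) then -Qm n k j else 0) := by
      intro j; congr 1; simp [Fin.ext_iff, eq_comm]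
    rw [Finset.sum_congr rfl fun j _ => this j,
      Finset.sum_ite_eq' Finset.univ _ (fun j => -Qm n k j)]
    simp only [Finset.mem_univ, if_pos]
    unfold Qm Wf
    simp only [Matrix.of_apply]
    push_cast
    ring_nf
  · have hm1 : (m:ℕ)+1 = n := by have := m.isLt; omega
    have : ∀ j : Fin n, (if (m:ℕ)+1 = (j:ℕ) then -Qm n k j else 0) = 0 := by
      intro j; rw [if_neg]; have := j.isLt; omega
    rw [Finset.sum_congr rfl fun j _ => this j, Finset.sum_const_zero]
    rw [hm1, Wzero]
    unfold Qm Wf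
    simp only [Matrix.of_apply]
    push_cast
    ring_nf

lemma Qeigen (n : ℕ)
    (nabla : Matrix (Fin n) (Fin n) ℝ)
    (hnabla : nabla = Matrix.of fun i j : Fin n =>
      if i = j then 1 else if (j : ℕ) + 1 = (i : ℕ) then -1 else 0)
    (k i : Fin n) :
    (Qm n * (nabla * nablaᵀ)) k i = (2 - 2 * Real.cos (2 * xi n k)) * Qm n k i := by
  rw [← Matrix.mul_assoc, Matrix.mul_apply]
  have hP : ∀ m : Fin n, (Qm n * nabla) k m = Wf n k m - Wf n k ((m:ℕ)+1) :=
    Qnabla n nabla hnabla k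
  have decomp : ∀ m : Fin n, (Qm n * nabla) k m * nablaᵀ m i
      = (if m = i then (Wf n k m - Wf n k ((m:ℕ)+1)) else 0)
        + (if (m:ℕ)+1 = (i:ℕ) then -(Wf n k m - Wf n k ((m:ℕ)+1)) else 0) := by
    intro m
    rw [hP m, Matrix.transpose_apply, hnabla]
    simp only [Matrix.of_apply, Fin.ext_iff]
    split_ifs <;> (first | ring1 | (exfalso; omega))
  rw [Finset.sum_congr rfl fun m _ => decomp m, Finset.sum_add_distrib]
  rw [Finset.sum_ite_eq' Finset.univ i (fun m => Wf n k m - Wf n k ((m:ℕ)+1))]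
  simp only [Finset.mem_univ, if_pos]
  by_cases hi : (i:ℕ) = 0
  · have hz : ∀ m : Fin n, (if (m:ℕ)+1 = (i:ℕ) then -(Wf n k m - Wf n k ((m:ℕ)+1)) else 0) = 0 := by
      intro m; rw [if_neg]; omega
    rw [Finset.sum_congr rfl fun m _ => hz m, Finset.sum_const_zero, add_zero]
    have e1 : Wf n k i = Real.cos (xi n k) := by unfold Wf; rw [hi]; norm_num
    have e3 : Wf n k ((i:ℕ)+1) = Real.cos (xi n k + 2 * xi n k) := by
      unfold Wf; rw [hi]; norm_num; ring_nf
    have tg := trig_gen (xi n k) (2 * xi n k)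
    have hneg : Real.cos (xi n k - 2 * xi n k) = Real.cos (xi n k) := by
      rw [show xi n k - 2 * xi n k = -(xi n k) by ring, Real.cos_neg]
    rw [e1, e3]
    unfold Qm
    simp only [Matrix.of_apply]
    have e4 : Real.cos ((2*((i:ℕ):ℝ)+1) * xi n k) = Real.cos (xi n k) := by rw [hi]; norm_num
    rw [e4]
    linarith [tg, hneg]
  · -- i ≥ 1
    have hi1 : 1 ≤ (i:ℕ) := by omega
    have hlt : (i:ℕ) - 1 < n := by have := i.isLt; omega
    have hdec : ∀ m : Fin n, (if (m:ℕ)+1 = (i:ℕ) then -(Wf n k m - Wf n k ((m:ℕ)+1)) else 0)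
        = (if m = (⟨(i:ℕ)-1, hlt⟩ : Fin n) then -(Wf n k m - Wf n k ((m:ℕ)+1)) else 0) := by
      intro m; congr 1; simp [Fin.ext_iff]; omega
    rw [Finset.sum_congr rfl fun m _ => hdec m,
      Finset.sum_ite_eq' Finset.univ _ (fun m : Fin n => -(Wf n k (m:ℕ) - Wf n k ((m:ℕ)+1)))]
    simp only [Finset.mem_univ, if_pos]
    have hip : (i:ℕ) - 1 + 1 = (i:ℕ) := by omega
    set x := (2*((i:ℕ):ℝ)+1) * xi n k with hx
    have e1 : Wf n k i = Real.cos x := rfl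
    have e2 : Wf n k ((i:ℕ)+1) = Real.cos (x + 2 * xi n k) := by
      unfold Wf; rw [hx]; push_cast; ring_nf
    have e3 : Wf n k ((⟨(i:ℕ)-1, hlt⟩ : Fin n)) = Real.cos (x - 2 * xi n k) := by
      unfold Wf
      have : ((((i:ℕ)-1 : ℕ)):ℝ) = ((i:ℕ):ℝ) - 1 := by
        rw [Nat.cast_sub hi1]; norm_num
      simp only [this]
      rw [hx]; ring_nf
    have e4 : Wf n k ((((⟨(i:ℕ)-1, hlt⟩ : Fin n)):ℕ)+1) = Real.cos x := by
      unfold Wf; simp only [hip]; rfl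
    have tg := trig_gen x (2 * xi n k)
    have eq : Qm n k i = Real.cos x := rfl
    rw [e2, e3, e4, eq]
    have : Wf n k i = Real.cos x := rfl
    rw [show Wf n k (i:ℕ) = Real.cos x from rfl]
    linarith [tg]

noncomputable def Dm (n : ℕ) (c v : ℝ) : Matrix (Fin n) (Fin n) ℝ :=
  Matrix.diagonal (fun k => c/(n:ℝ) + 2*v*(1 - Real.cos (2 * xi n k)))

lemma QQt (n : ℕ) : Qm n * (Qm n)ᵀ = ((2*(n:ℝ)+1)/4) • (1 : Matrix (Fin n) (Fin n) ℝ) := by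
  ext k l
  rw [Matrix.mul_apply]
  simp only [Matrix.transpose_apply, Matrix.smul_apply, Matrix.one_apply, Qm, Matrix.of_apply]
  rw [orth n k l]
  split_ifs <;> simp

lemma QGc (n : ℕ) (c v : ℝ)
    (nabla : Matrix (Fin n) (Fin n) ℝ)
    (hnabla : nabla = Matrix.of fun i j : Fin n =>
      if i = j then 1 else if (j : ℕ) + 1 = (i : ℕ) then -1 else 0) :
    Qm n * ((c/(n:ℝ)) • (1 : Matrix (Fin n) (Fin n) ℝ) + v • (nabla * nablaᵀ))
      = Dm n c v * Qm n := by
  ext k j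
  rw [Matrix.mul_add, Matrix.mul_smul, Matrix.mul_smul, Matrix.mul_one]
  simp only [Matrix.add_apply, Matrix.smul_apply, smul_eq_mul]
  rw [Qeigen n nabla hnabla k j]
  unfold Dm
  rw [Matrix.diagonal_mul]
  ring

lemma Ginv (n : ℕ) (hn : 0 < n) (c v : ℝ) (hc : 0 < c) (hv : 0 ≤ v)
    (nabla : Matrix (Fin n) (Fin n) ℝ)
    (hnabla : nabla = Matrix.of fun i j : Fin n =>
      if i = j then 1 else if (j : ℕ) + 1 = (i : ℕ) then -1 else 0) :
    ((c/(n:ℝ)) • (1 : Matrix (Fin n) (Fin n) ℝ) + v • (nabla * nablaᵀ))⁻¹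
      = (4/(2*(n:ℝ)+1)) • ((Qm n)ᵀ *
          (Matrix.diagonal (fun k => (c/(n:ℝ) + 2*v*(1 - Real.cos (2 * xi n k)))⁻¹) * Qm n)) := by
  have hN : (2*(n:ℝ)+1) ≠ 0 := by positivity
  have hn' : (0:ℝ) < n := by exact_mod_cast hn
  have hμ : ∀ k : Fin n, c/(n:ℝ) + 2*v*(1 - Real.cos (2 * xi n k)) ≠ 0 := by
    intro k
    have h1 : 0 < c/(n:ℝ) := div_pos hc hn'
    have h2 : Real.cos (2 * xi n k) ≤ 1 := Real.cos_le_one _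
    have h3 : 0 ≤ 2*v*(1 - Real.cos (2 * xi n k)) := by nlinarith
    exact ne_of_gt (by linarith)
  apply Matrix.inv_eq_right_inv
  have hGQ : ((c/(n:ℝ)) • (1 : Matrix (Fin n) (Fin n) ℝ) + v • (nabla * nablaᵀ)) * (Qm n)ᵀ
      = (Qm n)ᵀ * Dm n c v := by
    have h := congrArg Matrix.transpose (QGc n c v nabla hnabla)
    simpa [Matrix.transpose_mul, Matrix.transpose_add, Matrix.transpose_smul,
      Matrix.transpose_one, Matrix.transpose_transpose, Dm, Matrix.diagonal_transpose] using h
  rw [Matrix.mul_smul, ← Matrix.mul_assoc, hGQ, Matrix.mul_assoc ((Qm n)ᵀ), ← Matrix.mul_assoc (Dm n c v)]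
  have hDD : Dm n c v * Matrix.diagonal (fun k => (c/(n:ℝ) + 2*v*(1 - Real.cos (2 * xi n k)))⁻¹)
      = 1 := by
    unfold Dm
    rw [Matrix.diagonal_mul_diagonal]
    rw [show (fun k : Fin n => (c/(n:ℝ) + 2*v*(1 - Real.cos (2 * xi n k)))
        * (c/(n:ℝ) + 2*v*(1 - Real.cos (2 * xi n k)))⁻¹) = fun _ => 1 from
      funext fun k => mul_inv_cancel₀ (hμ k)]
    exact Matrix.diagonal_one
  rw [hDD, Matrix.one_mul]
  have hB : Qm n * ((4/(2*(n:ℝ)+1)) • (Qm n)ᵀ) = 1 := by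
    rw [Matrix.mul_smul, QQt, smul_smul]
    rw [show (4/(2*(n:ℝ)+1)) * ((2*(n:ℝ)+1)/4) = 1 by field_simp]
    exact one_smul _ _
  have hBQ := mul_eq_one_comm.mp hB
  have hQtQ : (Qm n)ᵀ * Qm n = ((2*(n:ℝ)+1)/4) • (1 : Matrix (Fin n) (Fin n) ℝ) := by
    have : ((2*(n:ℝ)+1)/4) • (((4/(2*(n:ℝ)+1)) • (Qm n)ᵀ) * Qm n)
        = (Qm n)ᵀ * Qm n := by
      rw [← Matrix.smul_mul, smul_smul,
        show ((2*(n:ℝ)+1)/4) * (4/(2*(n:ℝ)+1)) = 1 by field_simp, one_smul]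
    rw [← this, hBQ]
  rw [hQtQ, smul_smul]
  rw [show (4/(2*(n:ℝ)+1)) * ((2*(n:ℝ)+1)/4) = 1 by field_simp]
  exact one_smul _ _

lemma entry_bound (n : ℕ) (hn : 0 < n) (c v : ℝ) (hc : 0 < c) (hv : 0 ≤ v)
    (nabla : Matrix (Fin n) (Fin n) ℝ)
    (hnabla : nabla = Matrix.of fun i j : Fin n =>
      if i = j then 1 else if (j : ℕ) + 1 = (i : ℕ) then -1 else 0)
    (z : Fin n) :
    ((c/(n:ℝ)) • (1 : Matrix (Fin n) (Fin n) ℝ) + v • (nabla * nablaᵀ))⁻¹ z z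
      ≤ (4/(2*(n:ℝ)+1)) * ∑ k : Fin n, (c/(n:ℝ) + 2*v*(1 - Real.cos (2 * xi n k)))⁻¹ := by
  have hN : (0:ℝ) < 2*(n:ℝ)+1 := by positivity
  have hn' : (0:ℝ) < n := by exact_mod_cast hn
  have hμ : ∀ k : Fin n, 0 < c/(n:ℝ) + 2*v*(1 - Real.cos (2 * xi n k)) := by
    intro k
    have h1 : 0 < c/(n:ℝ) := div_pos hc hn'
    have h2 : Real.cos (2 * xi n k) ≤ 1 := Real.cos_le_one _
    have h3 : 0 ≤ 2*v*(1 - Real.cos (2 * xi n k)) := by nlinarith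
    linarith
  rw [Ginv n hn c v hc hv nabla hnabla]
  rw [Matrix.smul_apply, smul_eq_mul]
  apply mul_le_mul_of_nonneg_left _ (by positivity)
  rw [Matrix.mul_apply]
  apply Finset.sum_le_sum
  intro k _
  rw [Matrix.diagonal_mul, Matrix.transpose_apply]
  have hq : Qm n k z * Qm n k z ≤ 1 := by
    have := Real.neg_one_le_cos ((2*((z:ℕ):ℝ)+1) * xi n k)
    have := Real.cos_le_one ((2*((z:ℕ):ℝ)+1) * xi n k)
    simp only [Qm, Matrix.of_apply]
    nlinarith
  have hinv : 0 ≤ (c/(n:ℝ) + 2*v*(1 - Real.cos (2 * xi n k)))⁻¹ := le_of_lt (inv_pos.mpr (hμ k))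
  calc Qm n k z * ((c/(n:ℝ) + 2*v*(1 - Real.cos (2 * xi n k)))⁻¹ * Qm n k z)
      = (c/(n:ℝ) + 2*v*(1 - Real.cos (2 * xi n k)))⁻¹ * (Qm n k z * Qm n k z) := by ring
    _ ≤ (c/(n:ℝ) + 2*v*(1 - Real.cos (2 * xi n k)))⁻¹ * 1 := by
        exact mul_le_mul_of_nonneg_left hq hinv
    _ = (c/(n:ℝ) + 2*v*(1 - Real.cos (2 * xi n k)))⁻¹ := mul_one _

theorem stmt_14 (n : ℕ) (hn : 1 ≤ n) (a b v : ℝ) (ha : 0 < a) (hb : 0 < b) (hv : 0 ≤ v)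
    (nabla : Matrix (Fin n) (Fin n) ℝ)
    (hnabla : nabla = Matrix.of fun i j : Fin n =>
      if i = j then 1 else if (j : ℕ) + 1 = (i : ℕ) then -1 else 0)
    (G : ℝ → Matrix (Fin n) (Fin n) ℝ)
    (hG : ∀ c, G c = (c / n) • (1 : Matrix (Fin n) (Fin n) ℝ) + v • (nabla * nablaᵀ))
    (R : Matrix (Fin n) (Fin n) ℝ)
    (hR : R = Matrix.of fun i j : Fin n => if (i : ℕ) = 0 ∧ (j : ℕ) = 0 then 1 else 0)
    (Sa Sb : Matrix (Fin n) (Fin n) ℝ)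
    (hSa : Sa.PosSemidef) (hSb : Sb.PosSemidef)
    (hSa2 : Sa * Sa = (G a)⁻¹) (hSb2 : Sb * Sb = (G b)⁻¹) :
    ‖Matrix.toEuclideanCLM (𝕜 := ℝ) (Sa * R * Sb)‖ ≤
      4 / (2 * n + 1) *
        ∑ k : Fin n,
          (1 / (a / n + 2 * v * (1 - Real.cos (2 * (Real.pi / (2 * n + 1) * (((k : ℕ) + 1 : ℝ) - 1 / 2))))) +
           1 / (b / n + 2 * v * (1 - Real.cos (2 * (Real.pi / (2 * n + 1) * (((k : ℕ) + 1 : ℝ) - 1 / 2)))))) := by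
  have hn0 : 0 < n := hn
  have hN : (0:ℝ) < 2*(n:ℝ)+1 := by positivity
  set z0 : Fin n := ⟨0, hn0⟩ with hz0
  set δ : Fin n → ℝ := Pi.single z0 1 with hδ
  set ua : Fin n → ℝ := Sa *ᵥ δ with hua
  set wb : Fin n → ℝ := Sb *ᵥ δ with hwb
  -- symmetry of Sa, Sb
  have hSaT : ∀ i j, Sa i j = Sa j i := by
    intro i j
    have := congrFun (congrFun hSa.1 i) j
    simpa [Matrix.conjTranspose_apply] using this.symm
  have hSbT : ∀ i j, Sb i j = Sb j i := by
    intro i j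
    have := congrFun (congrFun hSb.1 i) j
    simpa [Matrix.conjTranspose_apply] using this.symm
  -- rank-one action
  have hM : ∀ x : Fin n → ℝ, (Sa * R * Sb) *ᵥ x = (wb ⬝ᵥ x) • ua := by
    intro x
    rw [← Matrix.mulVec_mulVec, ← Matrix.mulVec_mulVec]
    have hRv : R *ᵥ (Sb *ᵥ x) = ((Sb *ᵥ x) z0) • δ := by
      ext i
      rw [Matrix.mulVec, dotProduct]
      rw [hR]
      simp only [Matrix.of_apply]
      by_cases hi : (i:ℕ) = 0
      · have hiz : i = z0 := Fin.ext (by simp [hz0, hi])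
        subst hiz
        rw [Finset.sum_eq_single z0]
        · simp [hδ, Pi.single_apply, hi]
        · intro j _ hj
          rw [if_neg, zero_mul]
          intro hcon
          exact hj (Fin.ext (by simp [hz0, hcon.2]))
        · intro hc; exact absurd (Finset.mem_univ z0) hc
      · have : ∀ j : Fin n, (if (i:ℕ) = 0 ∧ (j:ℕ) = 0 then (1:ℝ) else 0) * (Sb *ᵥ x) j = 0 := by
          intro j; rw [if_neg (by tauto), zero_mul]
        rw [Finset.sum_congr rfl fun j _ => this j, Finset.sum_const_zero]
        have : i ≠ z0 := by intro hcon; subst hcon; exact hi rfl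
        simp [hδ, Pi.smul_apply, Pi.single_apply, this]
    rw [hRv, Matrix.mulVec_smul]
    congr 1
    rw [Matrix.mulVec, dotProduct, hwb]
    rw [Matrix.mulVec_single]
    simp only [MulOpposite.op_one, one_smul, Matrix.col_apply, mul_one]
    exact Finset.sum_congr rfl fun j _ => by rw [hSbT z0 j]; rfl
  -- Euclidean vectors
  set ea : EuclideanSpace ℝ (Fin n) := (WithLp.equiv 2 (Fin n → ℝ)).symm ua with hea
  set eb : EuclideanSpace ℝ (Fin n) := (WithLp.equiv 2 (Fin n → ℝ)).symm wb with heb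
  have hop : ‖Matrix.toEuclideanCLM (𝕜 := ℝ) (Sa * R * Sb)‖ ≤ ‖ea‖ * ‖eb‖ := by
    rw [mul_comm]
    apply ContinuousLinearMap.opNorm_le_bound _ (mul_nonneg (norm_nonneg _) (norm_nonneg _))
    intro x
    have hx : Matrix.toEuclideanCLM (𝕜 := ℝ) (Sa * R * Sb) x
        = (WithLp.equiv 2 (Fin n → ℝ)).symm ((Sa * R * Sb) *ᵥ (WithLp.equiv 2 (Fin n → ℝ) x)) := by
      rfl
    rw [hx, hM]
    have hsm : (WithLp.equiv 2 (Fin n → ℝ)).symm ((wb ⬝ᵥ (WithLp.equiv 2 (Fin n → ℝ) x)) • ua)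
        = (wb ⬝ᵥ (WithLp.equiv 2 (Fin n → ℝ) x)) • ea := by
      rw [hea]; rfl
    rw [hsm, norm_smul, Real.norm_eq_abs]
    have hinner : wb ⬝ᵥ (WithLp.equiv 2 (Fin n → ℝ) x) = inner (𝕜 := ℝ) eb x := by
      rw [PiLp.inner_apply]
      simp only [RCLike.inner_apply, conj_trivial]
      exact Finset.sum_congr rfl fun i _ => by
        exact mul_comm _ _
    rw [hinner]
    have := abs_real_inner_le_norm eb x
    have hea0 : (0:ℝ) ≤ ‖ea‖ := norm_nonneg _
    calc |inner (𝕜 := ℝ) eb x| * ‖ea‖ ≤ (‖eb‖ * ‖x‖) * ‖ea‖ := by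
          apply mul_le_mul_of_nonneg_right _ hea0
          exact this
      _ = ‖eb‖ * ‖ea‖ * ‖x‖ := by ring
  -- norms squared are diagonal entries of inverses
  have hnorm : ∀ (S : Matrix (Fin n) (Fin n) ℝ) (hS : ∀ i j, S i j = S j i),
      ‖(WithLp.equiv 2 (Fin n → ℝ)).symm (S *ᵥ δ)‖^2 = (S * S) z0 z0 := by
    intro S hS
    rw [← real_inner_self_eq_norm_sq]
    rw [PiLp.inner_apply]
    simp only [RCLike.inner_apply, conj_trivial, WithLp.equiv_symm_apply, WithLp.ofLp_toLp]
    rw [Matrix.mul_apply]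
    apply Finset.sum_congr rfl
    intro i _
    rw [hδ, Matrix.mulVec_single]
    simp only [MulOpposite.op_one, one_smul, Matrix.col_apply, mul_one]
    rw [hS z0 i]
  have hna : ‖ea‖^2 = (G a)⁻¹ z0 z0 := by
    rw [hea, hua, hnorm Sa hSaT, hSa2]
  have hnb : ‖eb‖^2 = (G b)⁻¹ z0 z0 := by
    rw [heb, hwb, hnorm Sb hSbT, hSb2]
  -- entry bounds
  have hba := entry_bound n hn0 a v ha hv nabla hnabla z0
  have hbb := entry_bound n hn0 b v hb hv nabla hnabla z0
  rw [← hG a] at hba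
  rw [← hG b] at hbb
  -- angles match
  have hang : ∀ k : Fin n, 2 * (π/(2*(n:ℝ)+1) * (((k:ℕ)+1:ℝ) - 1/2)) = 2 * xi n k := by
    intro k
    unfold xi
    field_simp
    ring
  have hterm : ∀ (c : ℝ) (k : Fin n),
      1 / (c / n + 2 * v * (1 - Real.cos (2 * (π/(2*(n:ℝ)+1) * (((k:ℕ)+1:ℝ) - 1/2)))))
        = (c/(n:ℝ) + 2*v*(1 - Real.cos (2 * xi n k)))⁻¹ := by
    intro c k
    rw [hang k, one_div]
  have hsum_nonneg : ∀ (c : ℝ), 0 < c →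
      0 ≤ ∑ k : Fin n, (c/(n:ℝ) + 2*v*(1 - Real.cos (2 * xi n k)))⁻¹ := by
    intro c hc
    apply Finset.sum_nonneg
    intro k _
    have h1 : 0 < c/(n:ℝ) := div_pos hc (by exact_mod_cast hn0)
    have h2 : Real.cos (2 * xi n k) ≤ 1 := Real.cos_le_one _
    have h3 : 0 ≤ 2*v*(1 - Real.cos (2 * xi n k)) := by nlinarith
    positivity
  -- final chain
  have hrhs : 4 / (2 * (n:ℝ) + 1) *
        ∑ k : Fin n,
          (1 / (a / n + 2 * v * (1 - Real.cos (2 * (π / (2 * (n:ℝ) + 1) * (((k : ℕ) + 1 : ℝ) - 1 / 2))))) +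
           1 / (b / n + 2 * v * (1 - Real.cos (2 * (π / (2 * (n:ℝ) + 1) * (((k : ℕ) + 1 : ℝ) - 1 / 2))))))
      = 4/(2*(n:ℝ)+1) * ∑ k : Fin n, (a/(n:ℝ) + 2*v*(1 - Real.cos (2 * xi n k)))⁻¹
        + 4/(2*(n:ℝ)+1) * ∑ k : Fin n, (b/(n:ℝ) + 2*v*(1 - Real.cos (2 * xi n k)))⁻¹ := by
    rw [Finset.sum_congr rfl fun k _ => by rw [hterm a k, hterm b k]]
    rw [Finset.sum_add_distrib, mul_add]
  calc ‖Matrix.toEuclideanCLM (𝕜 := ℝ) (Sa * R * Sb)‖ ≤ ‖ea‖ * ‖eb‖ := hop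
    _ ≤ (‖ea‖^2 + ‖eb‖^2)/2 := by nlinarith [sq_nonneg (‖ea‖ - ‖eb‖)]
    _ ≤ (4/(2*(n:ℝ)+1) * ∑ k : Fin n, (a/(n:ℝ) + 2*v*(1 - Real.cos (2 * xi n k)))⁻¹
        + 4/(2*(n:ℝ)+1) * ∑ k : Fin n, (b/(n:ℝ) + 2*v*(1 - Real.cos (2 * xi n k)))⁻¹)/2 := by
        rw [hna, hnb]; linarith [hba, hbb]
    _ ≤ 4/(2*(n:ℝ)+1) * ∑ k : Fin n, (a/(n:ℝ) + 2*v*(1 - Real.cos (2 * xi n k)))⁻¹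
        + 4/(2*(n:ℝ)+1) * ∑ k : Fin n, (b/(n:ℝ) + 2*v*(1 - Real.cos (2 * xi n k)))⁻¹ := by
        have h40 : (0:ℝ) ≤ 4/(2*(n:ℝ)+1) := by positivity
        have h1 := mul_nonneg h40 (hsum_nonneg a ha)
        have h2 := mul_nonneg h40 (hsum_nonneg b hb)
        linarith
    _ = _ := hrhs.symm
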